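/- Let J be a finite set of jobs that is feasible on m machines. Then for every finite set I ⊆ ℤ, the total contribution satisfies C(J, I) ≤ m·|I|. (This is the easy direction of the paper's characterization of the optimum.) -/

import Mathlib

/-- A job given by integer release date `r`, deadline `d`, and processing time `p`. -/
structure Job where
  r : ℤ
  d : ℤ
  p : ℤ
deriving DecidableEq

/-- A job is valid if `1 ≤ p` and `r + p ≤ d`. -/
def Job.valid (j : Job) : Prop := 1 ≤ j.p ∧ j.r + j.p ≤ j.d

/-- The interval `I(j) = {t ∈ ℤ : r ≤ t < d}` of a job. -/
noncomputable def Job.interval (j : Job) : Finset ℤ := Finset.Ico j.r j.d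

/-- The laxity `ℓ_j = d - r - p` of a job. -/
def Job.lax (j : Job) : ℤ := j.d - j.r - j.p

/-- The contribution `C(j, I) = max {0, |I ∩ I(j)| - ℓ_j}` of a job to a finite set `I ⊆ ℤ`. -/
noncomputable def contribution (j : Job) (I : Finset ℤ) : ℤ :=
  max 0 (((I ∩ j.interval).card : ℤ) - j.lax)

/-- A finite set of jobs `J` is feasible on `m` machines. -/
def Feasible (J : Finset Job) (m : ℕ) : Prop :=
  ∃ σ : ℤ → Finset Job,
    (∀ t, σ t ⊆ J) ∧
    (∀ t, (σ t).card ≤ m) ∧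
    (∀ t, ∀ j ∈ σ t, j.r ≤ t ∧ t < j.d) ∧
    (∀ j ∈ J, ((Finset.Ico j.r j.d).filter (fun t => j ∈ σ t)).card = j.p.toNat)

/-- If `J` is feasible on `m` machines, then `C(J, I) ≤ m·|I|`
for every finite `I ⊆ ℤ`. -/
theorem contribution_le_of_feasible
    (J : Finset Job) (hJ : ∀ j ∈ J, j.valid) (m : ℕ)
    (hfeas : Feasible J m) (I : Finset ℤ) :
    ∑ j ∈ J, contribution j I ≤ (m : ℤ) * I.card := by
  obtain ⟨σ, hsub, hcard, htime, hcount⟩ := hfeas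
  have key : ∀ j ∈ J, contribution j I ≤ ((I.filter (fun t => j ∈ σ t)).card : ℤ) := by
    intro j hj
    obtain ⟨hp1, hpd⟩ := hJ j hj
    set T := (Finset.Ico j.r j.d).filter (fun t => j ∈ σ t) with hT
    set A := I ∩ j.interval with hA
    have hTsub : T ⊆ j.interval := Finset.filter_subset _ _
    have hAsub : A ⊆ j.interval := Finset.inter_subset_right
    have hTA : T ∩ A ⊆ I.filter (fun t => j ∈ σ t) := by
      intro t ht
      rw [Finset.mem_inter] at ht
      obtain ⟨ht1, ht2⟩ := ht
      rw [hT, Finset.mem_filter] at ht1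
      rw [hA, Finset.mem_inter] at ht2
      exact Finset.mem_filter.2 ⟨ht2.1, ht1.2⟩
    have h1 : T.card ≤ (T ∩ A).card + (j.interval \ A).card := by
      have : T ⊆ (T ∩ A) ∪ (j.interval \ A) := by
        intro t ht
        by_cases hta : t ∈ A
        · exact Finset.mem_union_left _ (Finset.mem_inter.2 ⟨ht, hta⟩)
        · exact Finset.mem_union_right _ (Finset.mem_sdiff.2 ⟨hTsub ht, hta⟩)
      calc T.card ≤ ((T ∩ A) ∪ (j.interval \ A)).card := Finset.card_le_card this
        _ ≤ _ := Finset.card_union_le _ _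
    have hsd : (j.interval \ A).card = j.interval.card - A.card :=
      Finset.card_sdiff_of_subset hAsub
    have hTcard : (T.card : ℤ) = j.p := by
      rw [hcount j hj, Int.toNat_of_nonneg (by linarith)]
    have hIc : (j.interval.card : ℤ) = j.d - j.r := by
      simp [Job.interval, Int.toNat_of_nonneg (by linarith : (0:ℤ) ≤ j.d - j.r)]
    have hAle : A.card ≤ j.interval.card := Finset.card_le_card hAsub
    have h2 : ((T ∩ A).card : ℤ) ≤ ((I.filter (fun t => j ∈ σ t)).card : ℤ) := by
      exact_mod_cast Finset.card_le_card hTA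
    have h1' : (T.card : ℤ) ≤ ((T ∩ A).card : ℤ) + ((j.interval.card : ℤ) - (A.card : ℤ)) := by
      have := h1
      rw [hsd] at this
      omega
    rw [contribution]
    have : ((A.card : ℤ)) - j.lax ≤ ((I.filter (fun t => j ∈ σ t)).card : ℤ) := by
      simp only [Job.lax] at *
      omega
    apply max_le (by positivity)
    simpa [← hA, Finset.inter_comm] using this
  calc ∑ j ∈ J, contribution j I
      ≤ ∑ j ∈ J, ((I.filter (fun t => j ∈ σ t)).card : ℤ) := Finset.sum_le_sum key
    _ = ∑ t ∈ I, ((J.filter (fun j => j ∈ σ t)).card : ℤ) := by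
        have : ∑ j ∈ J, (I.filter (fun t => j ∈ σ t)).card
            = ∑ t ∈ I, (J.filter (fun j => j ∈ σ t)).card := by
          simp only [Finset.card_filter]
          exact Finset.sum_comm
        exact_mod_cast this
    _ ≤ ∑ t ∈ I, (m : ℤ) := by
        apply Finset.sum_le_sum
        intro t _
        have : (J.filter (fun j => j ∈ σ t)) ⊆ σ t := by
          intro j hjm; exact (Finset.mem_filter.1 hjm).2
        exact_mod_cast (Finset.card_le_card this).trans (hcard t)
    _ = (m : ℤ) * I.card := by
        simp [mul_comm]
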